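/- There exists a counterexample to the divided-power vanishing lemma in characteristic 2: over R = Z/2Z, with E free of rank 2 with basis x, y, the R-linear map φ : D_3(E) → R defined on the basis x^(3), x^(2)y, xy^(2), y^(3) of D_3(E) by φ(x^(3)) = φ(y^(3)) = 0 and φ(x^(2)y) = φ(xy^(2)) = 1 satisfies φ(ε^(3)) = 0 for every ε ∈ E, yet φ is not identically zero. -/

import Mathlib

/- The counterexample to Lemma 1.3 over `R = ℤ/2`.  As in the formalization of the lemma,
`E` is free of rank 2 with basis `x, y` (coordinates `Fin 2 → R`), and `D_3 E` is modelled by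
coordinates with respect to its basis `x^(3), x^(2)y, xy^(2), y^(3)`, indexed by exponent
vectors `k : Fin 2 → ℕ` with `∑ k i = 3`; the divided power `ε^(3)` of `ε = a•x + b•y` has
coordinates `k ↦ ∏ i, ε i ^ k i`.  The map `φ` sends `x^(3), y^(3)` to `0` and
`x^(2)y, xy^(2)` to `1`. -/

theorem stmt_1 :
    ∃ φ : ({k : Fin 2 → ℕ // ∑ i, k i = 3} → ZMod 2) →ₗ[ZMod 2] ZMod 2,
      φ (Pi.single ⟨![3, 0], by decide⟩ 1) = 0 ∧
      φ (Pi.single ⟨![0, 3], by decide⟩ 1) = 0 ∧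
      φ (Pi.single ⟨![2, 1], by decide⟩ 1) = 1 ∧
      φ (Pi.single ⟨![1, 2], by decide⟩ 1) = 1 ∧
      (∀ ε : Fin 2 → ZMod 2,
        φ (fun k => ∏ i, ε i ^ (k : Fin 2 → ℕ) i) = 0) ∧
      φ ≠ 0 := by
  have k1 : {k : Fin 2 → ℕ // ∑ i, k i = 3} := ⟨![2,1], by decide⟩
  refine ⟨(LinearMap.proj (R := ZMod 2) (φ := fun _ : {k : Fin 2 → ℕ // ∑ i, k i = 3} => ZMod 2)
        ⟨![2,1], by decide⟩)
      + LinearMap.proj ⟨![1,2], by decide⟩, ?_, ?_, ?_, ?_, ?_, ?_⟩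
  · simp [Pi.single_apply]
  · simp [Pi.single_apply]
  · simp [Pi.single_apply]
  · simp [Pi.single_apply]
  · intro ε
    simp [Fin.prod_univ_two]
    revert ε; decide
  · intro h
    have := congrArg (fun ψ : _ →ₗ[ZMod 2] ZMod 2 => ψ (Pi.single ⟨![2,1], by decide⟩ 1)) h
    simp [Pi.single_apply, show ¬(![1,2] = ![2,1]) by decide] at this
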